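/- Unbalanced type β dynamics on the projective plane (Lemma 2.8, diagonal case): Let a_n = diag(α_n, β_n, 1) ∈ GL(3,ℝ) with α_n ≥ β_n ≥ 1 for all n, β_n → ∞ and β_n/α_n → λ for some λ ∈ (0,1], acting on ℝP². Then: (1) for every p = [x:y:z] ∈ ℝP² with (x,y) ≠ (0,0), the dynamic set D_{(a_n)}(p) equals {[x : λy : 0]}; (2) D_{(a_n)}([e₃]) = ℝP². -/

import Mathlib

open Matrix Filter Topology Set

noncomputable section

/-- `V3` is `ℝ³`. -/
abbrev V3 : Type := Fin 3 → ℝ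

/-- The group `GL(3,ℝ)` of invertible `3 × 3` real matrices. -/
abbrev GL3 : Type := (Matrix (Fin 3) (Fin 3) ℝ)ˣ

/-- Nonzero vectors of `ℝ³` up to a nonzero scalar. -/
def projSetoid : Setoid {v : V3 // v ≠ 0} where
  r v w := ∃ c : ℝ, c ≠ 0 ∧ w.1 = c • v.1
  iseqv := by
    refine ⟨fun v => ⟨1, one_ne_zero, (one_smul ℝ v.1).symm⟩, ?_, ?_⟩
    · rintro v w ⟨c, hc, h⟩
      exact ⟨c⁻¹, inv_ne_zero hc, by rw [h, smul_smul, inv_mul_cancel₀ hc, one_smul]⟩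
    · rintro u v w ⟨c, hc, h⟩ ⟨d, hd, h'⟩
      exact ⟨d * c, mul_ne_zero hd hc, by rw [h', h, smul_smul]⟩

/-- The real projective plane `ℝP²`, as the quotient of `ℝ³ \ {0}` by nonzero scalings,
with the quotient topology.  (We use the same model for the dual projective plane `ℝP²*`,
a class `[f₁ : f₂ : f₃]*` of linear forms being recorded through its coefficient
vector `(f₁, f₂, f₃)`; the form acts on vectors by the dot product.) -/
def RP2 : Type := Quotient projSetoid

/-- The projective class `[v]` of a nonzero vector. -/
def RP2.mk (v : V3) (hv : v ≠ 0) : RP2 := Quotient.mk projSetoid ⟨v, hv⟩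

instance : TopologicalSpace RP2 :=
  inferInstanceAs (TopologicalSpace (Quotient projSetoid))

lemma RP2.ind {P : RP2 → Prop} (h : ∀ (v : V3) (hv : v ≠ 0), P (RP2.mk v hv)) (p : RP2) : P p := by
  refine Quotient.ind (fun a => ?_) p
  exact h a.1 a.2

lemma RP2.mk_eq_mk_iff {v w : V3} {hv : v ≠ 0} {hw : w ≠ 0} :
    RP2.mk v hv = RP2.mk w hw ↔ ∃ c : ℝ, c ≠ 0 ∧ w = c • v :=
  ⟨fun h => Quotient.exact h, fun h => Quotient.sound h⟩

lemma ne_zero_of_coord {v : V3} (i : Fin 3) (h : v i ≠ 0) : v ≠ 0 :=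
  fun h0 => h (by rw [h0]; rfl)

/-- The projective class of a vector, defaulting to `[e₁]` for the zero vector. -/
def RP2.mk' (v : V3) : RP2 :=
  if h : v = 0 then RP2.mk ![1, 0, 0] (ne_zero_of_coord 0 (by simp)) else RP2.mk v h

lemma e1_ne : (![1, 0, 0] : V3) ≠ 0 := ne_zero_of_coord 0 (by norm_num)

lemma e3_ne : (![0, 0, 1] : V3) ≠ 0 := ne_zero_of_coord 2 (by simp)

lemma GL3.mulVec_ne {g : GL3} {v : V3} (hv : v ≠ 0) :
    (g : Matrix (Fin 3) (Fin 3) ℝ) *ᵥ v ≠ 0 := by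
  intro h
  apply hv
  have h2 : ((g⁻¹ : GL3) : Matrix (Fin 3) (Fin 3) ℝ) *ᵥ
      ((g : Matrix (Fin 3) (Fin 3) ℝ) *ᵥ v) = 0 := by rw [h, Matrix.mulVec_zero]
  rwa [Matrix.mulVec_mulVec, Units.inv_mul, Matrix.one_mulVec] at h2

/-- The action of `g ∈ GL(3,ℝ)` on `ℝP²`, `g · [v] = [g v]`. -/
def RP2.mapMat (g : GL3) : RP2 → RP2 :=
  Quotient.lift
    (fun a : {v : V3 // v ≠ 0} =>
      RP2.mk ((g : Matrix (Fin 3) (Fin 3) ℝ) *ᵥ a.1) (GL3.mulVec_ne a.2))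
    (by
      rintro a b ⟨c, hc, h⟩
      apply Quotient.sound
      refine ⟨c, hc, ?_⟩
      show (g : Matrix (Fin 3) (Fin 3) ℝ) *ᵥ b.1 = c • ((g : Matrix (Fin 3) (Fin 3) ℝ) *ᵥ a.1)
      rw [h, Matrix.mulVec_smul])

lemma RP2.mapMat_mk (g : GL3) (v : V3) (hv : v ≠ 0) :
    RP2.mapMat g (RP2.mk v hv) =
      RP2.mk ((g : Matrix (Fin 3) (Fin 3) ℝ) *ᵥ v) (GL3.mulVec_ne hv) := rfl

/-- The element of `GL(3,ℝ)` acting on coefficient vectors of linear forms the way `g`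
acts on `ℝP²*`:  the coefficient vector of `f ∘ g⁻¹` is `(g⁻¹)ᵀ` applied to that of `f`. -/
def dualGL (g : GL3) : GL3 where
  val := ((g⁻¹ : GL3) : Matrix (Fin 3) (Fin 3) ℝ)ᵀ
  inv := ((g : GL3) : Matrix (Fin 3) (Fin 3) ℝ)ᵀ
  val_inv := by rw [← Matrix.transpose_mul, Units.mul_inv, Matrix.transpose_one]
  inv_val := by rw [← Matrix.transpose_mul, Units.inv_mul, Matrix.transpose_one]

/-- The flag space `X`: pairs `([v], [f]) ∈ ℝP² × ℝP²*` with `f(v) = 0`. -/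
def FlagSpace : Set (RP2 × RP2) :=
  {x | ∀ (v f : V3) (hv : v ≠ 0) (hf : f ≠ 0),
    x.1 = RP2.mk v hv → x.2 = RP2.mk f hf → f ⬝ᵥ v = 0}

/-- Points of the flag space. -/
abbrev Flag3 : Type := ↥FlagSpace

lemma mem_flagSpace_mk {v f : V3} (hv : v ≠ 0) (hf : f ≠ 0) (h : f ⬝ᵥ v = 0) :
    (RP2.mk v hv, RP2.mk f hf) ∈ FlagSpace := by
  rintro v' f' hv' hf' hp hq
  obtain ⟨c, hc, hcv⟩ := RP2.mk_eq_mk_iff.1 hp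
  obtain ⟨d, hd, hdf⟩ := RP2.mk_eq_mk_iff.1 hq
  rw [hcv, hdf, smul_dotProduct, dotProduct_smul, h]
  simp

lemma dot_invariance (g : GL3) (v f : V3) :
    (((dualGL g : GL3) : Matrix (Fin 3) (Fin 3) ℝ) *ᵥ f) ⬝ᵥ
      ((g : Matrix (Fin 3) (Fin 3) ℝ) *ᵥ v) = f ⬝ᵥ v := by
  have h1 : ((dualGL g : GL3) : Matrix (Fin 3) (Fin 3) ℝ) *ᵥ f =
      f ᵥ* ((g⁻¹ : GL3) : Matrix (Fin 3) (Fin 3) ℝ) := Matrix.mulVec_transpose _ _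
  rw [h1, Matrix.dotProduct_mulVec, Matrix.vecMul_vecMul, Units.inv_mul, Matrix.vecMul_one]

lemma flagPair_mem (g : GL3) {x : RP2 × RP2} (hx : x ∈ FlagSpace) :
    (RP2.mapMat g x.1, RP2.mapMat (dualGL g) x.2) ∈ FlagSpace := by
  obtain ⟨p, q⟩ := x
  revert hx
  refine Quotient.inductionOn₂ p q ?_
  rintro ⟨v, hv⟩ ⟨f, hf⟩ hx
  have h0 : f ⬝ᵥ v = 0 := hx v f hv hf rfl rfl
  exact mem_flagSpace_mk _ _ (by rw [dot_invariance]; exact h0)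

/-- The action of `g ∈ GL(3,ℝ)` on the flag space,
`g · ([v], [f]) = ([g v], [f ∘ g⁻¹])`. -/
def flagMap (g : GL3) (x : Flag3) : Flag3 :=
  ⟨(RP2.mapMat g x.1.1, RP2.mapMat (dualGL g) x.1.2), flagPair_mem g x.2⟩

/-! ### Composition laws and continuity -/

lemma RP2.mapMat_mapMat (g h : GL3) (p : RP2) :
    RP2.mapMat g (RP2.mapMat h p) = RP2.mapMat (g * h) p := by
  refine Quotient.inductionOn p fun a => ?_
  apply Quotient.sound
  exact ⟨1, one_ne_zero, by simp [Matrix.mulVec_mulVec, Units.val_mul]⟩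

lemma RP2.mapMat_one (p : RP2) : RP2.mapMat 1 p = p := by
  refine Quotient.inductionOn p fun a => ?_
  apply Quotient.sound
  exact ⟨1, one_ne_zero, by simp [Matrix.one_mulVec, Units.val_one]⟩

lemma dualGL_mul (g h : GL3) : dualGL (g * h) = dualGL g * dualGL h := by
  apply Units.ext
  rw [Units.val_mul]
  show (((g * h)⁻¹ : GL3) : Matrix (Fin 3) (Fin 3) ℝ)ᵀ =
    ((g⁻¹ : GL3) : Matrix (Fin 3) (Fin 3) ℝ)ᵀ * ((h⁻¹ : GL3) : Matrix (Fin 3) (Fin 3) ℝ)ᵀ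
  rw [_root_.mul_inv_rev, Units.val_mul, Matrix.transpose_mul]

lemma dualGL_one : dualGL (1 : GL3) = 1 := by
  apply Units.ext
  show (((1 : GL3)⁻¹ : GL3) : Matrix (Fin 3) (Fin 3) ℝ)ᵀ = ((1 : GL3) : Matrix (Fin 3) (Fin 3) ℝ)
  rw [inv_one, Units.val_one, Matrix.transpose_one]

lemma flagMap_flagMap (g h : GL3) (x : Flag3) :
    flagMap g (flagMap h x) = flagMap (g * h) x := by
  apply Subtype.ext
  apply Prod.ext
  · exact RP2.mapMat_mapMat g h x.1.1
  · show RP2.mapMat (dualGL g) (RP2.mapMat (dualGL h) x.1.2) = RP2.mapMat (dualGL (g * h)) x.1.2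
    rw [RP2.mapMat_mapMat, dualGL_mul]

lemma flagMap_one (x : Flag3) : flagMap 1 x = x := by
  apply Subtype.ext
  apply Prod.ext
  · exact RP2.mapMat_one x.1.1
  · show RP2.mapMat (dualGL 1) x.1.2 = x.1.2
    rw [dualGL_one, RP2.mapMat_one]

lemma continuous_mulVec (M : Matrix (Fin 3) (Fin 3) ℝ) :
    Continuous fun v : V3 => M *ᵥ v := by
  have h : (fun v : V3 => M *ᵥ v) = fun v => fun i => ∑ j, M i j * v j := by
    funext v i
    simp [Matrix.mulVec, dotProduct]
  rw [h]
  exact continuous_pi fun i =>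
    continuous_finset_sum _ fun j _ => continuous_const.mul (continuous_apply j)

lemma continuous_mapMat (g : GL3) : Continuous (RP2.mapMat g) := by
  apply Continuous.quotient_lift
  exact continuous_quotient_mk'.comp
    (Continuous.subtype_mk ((continuous_mulVec _).comp continuous_subtype_val) _)

lemma continuous_flagMap (g : GL3) : Continuous (flagMap g) := by
  apply Continuous.subtype_mk
  exact ((continuous_mapMat g).comp (continuous_fst.comp continuous_subtype_val)).prodMk
    ((continuous_mapMat (dualGL g)).comp (continuous_snd.comp continuous_subtype_val))

/-- The action of `g ∈ GL(3,ℝ)` on the flag space, as a homeomorphism. -/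
def flagHomeo (g : GL3) : Flag3 ≃ₜ Flag3 where
  toFun := flagMap g
  invFun := flagMap g⁻¹
  left_inv := fun x => by rw [flagMap_flagMap, inv_mul_cancel, flagMap_one]
  right_inv := fun x => by rw [flagMap_flagMap, mul_inv_cancel, flagMap_one]
  continuous_toFun := continuous_flagMap g
  continuous_invFun := continuous_flagMap g⁻¹

/-- The group of homeomorphisms of a topological space
(with `(f * g) x = f (g x)`). -/
instance homeoGroup (Z : Type*) [TopologicalSpace Z] : Group (Z ≃ₜ Z) where
  mul f g := g.trans f
  one := Homeomorph.refl Z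
  inv := Homeomorph.symm
  mul_assoc _ _ _ := Homeomorph.ext fun _ => rfl
  one_mul _ := Homeomorph.ext fun _ => rfl
  mul_one _ := Homeomorph.ext fun _ => rfl
  inv_mul_cancel f := Homeomorph.ext fun x => f.symm_apply_apply x

/-! ### Geometric objects in the flag space -/

/-- The α-circle of a point `p ∈ ℝP²`: all flags whose point is `p`. -/
def Cα (p : RP2) : Set Flag3 := {x | x.1.1 = p}

/-- The β-circle of the projective line with defining form (class) `q`:
all flags whose plane is `ker q`. -/
def Cβ (q : RP2) : Set Flag3 := {x | x.1.2 = q}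

/-- The plane of the flag `x` contains the direction of the vector `u`. -/
def planeContains (x : Flag3) (u : V3) : Prop :=
  ∀ (f : V3) (hf : f ≠ 0), x.1.2 = RP2.mk f hf → f ⬝ᵥ u = 0

/-- The point of the flag `x` lies on the projective line defined by the linear
form of coefficients `w`. -/
def pointOnForm (x : Flag3) (w : V3) : Prop :=
  ∀ (v : V3) (hv : v ≠ 0), x.1.1 = RP2.mk v hv → w ⬝ᵥ v = 0

/-- The β-circle of the projective line spanned by the (independent) directions of
`u` and `w`: all flags whose plane contains both. -/
def CβSpan (u w : V3) : Set Flag3 := {x | planeContains x u ∧ planeContains x w}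

lemma li_ne_zero_0 {v1 v2 v3 : V3} (h : LinearIndependent ℝ ![v1, v2, v3]) : v1 ≠ 0 := by
  have := h.ne_zero 0; simpa using this

lemma li_ne_zero_1 {v1 v2 v3 : V3} (h : LinearIndependent ℝ ![v1, v2, v3]) : v2 ≠ 0 := by
  have := h.ne_zero 1; simpa using this

lemma li_ne_zero_2 {v1 v2 v3 : V3} (h : LinearIndependent ℝ ![v1, v2, v3]) : v3 ≠ 0 := by
  have := h.ne_zero 2; simpa using this

/-- The repulsive bouquet of circles `B⁻(g) = C_α([v₃]) ∪ C_β(span(v₂,v₃))` of a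
loxodromic element with eigenvectors `v₁, v₂, v₃` (eigenvalues in decreasing order
of modulus). -/
def bouquetMinus (v2 v3 : V3) (h3 : v3 ≠ 0) : Set Flag3 :=
  Cα (RP2.mk v3 h3) ∪ CβSpan v2 v3

/-- The attractive bouquet of circles `B⁺(g) = C_α([v₁]) ∪ C_β(span(v₁,v₂))`. -/
def bouquetPlus (v1 v2 : V3) (h1 : v1 ≠ 0) : Set Flag3 :=
  Cα (RP2.mk v1 h1) ∪ CβSpan v1 v2

/-- The dynamic set of a point `x` under a sequence of maps `g n`: all limits of
`g (n k) (x k)` for a strictly increasing sequence `(n k)` and a sequence `x k → x`. -/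
def DynSet {M : Type*} [TopologicalSpace M] (g : ℕ → M → M) (x : M) : Set M :=
  {y | ∃ φ : ℕ → ℕ, StrictMono φ ∧ ∃ u : ℕ → M,
    Tendsto u atTop (𝓝 x) ∧ Tendsto (fun k => g (φ k) (u k)) atTop (𝓝 y)}

end


/-! ### Auxiliary lemmas for the proof -/

lemma sumsq_pos {v : V3} (hv : v ≠ 0) : 0 < ∑ k, v k ^ 2 := by
  obtain ⟨i, hi⟩ := Function.ne_iff.1 hv
  simp only [Pi.zero_apply] at hi
  exact Finset.sum_pos' (fun k _ => sq_nonneg _) ⟨i, Finset.mem_univ i, by positivity⟩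

noncomputable def projFaux (a : {v : V3 // v ≠ 0}) : Fin 3 → Fin 3 → ℝ :=
  fun i j => (∑ k, a.1 k ^ 2)⁻¹ * (a.1 i * a.1 j)

lemma projFaux_wd : ∀ a b : {v : V3 // v ≠ 0}, projSetoid.r a b → projFaux a = projFaux b := by
  rintro ⟨v, hv⟩ ⟨w, hw⟩ ⟨c, hc, h⟩
  simp only at h
  subst h
  funext i j
  simp only [projFaux, Pi.smul_apply, smul_eq_mul]
  have hs := (sumsq_pos hv).ne'
  have : ∑ k, (c * v k) ^ 2 = c ^ 2 * ∑ k, v k ^ 2 := by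
    rw [Finset.mul_sum]; congr 1; funext k; ring
  rw [this, mul_inv]
  field_simp

noncomputable def projF : RP2 → (Fin 3 → Fin 3 → ℝ) := Quotient.lift projFaux projFaux_wd

lemma projF_inj : Function.Injective projF := by
  intro p q
  refine Quotient.inductionOn₂ p q ?_
  rintro ⟨v, hv⟩ ⟨w, hw⟩ h
  apply Quotient.sound
  have h' : ∀ i j, (∑ k, v k ^ 2)⁻¹ * (v i * v j) = (∑ k, w k ^ 2)⁻¹ * (w i * w j) := by
    intro i j; exact congrFun (congrFun h i) j
  set s := ∑ k, v k ^ 2 with hs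
  set t := ∑ k, w k ^ 2 with ht
  have hsp := sumsq_pos hv
  have htp := sumsq_pos hw
  have key : ∀ i, s⁻¹ * (∑ j, v j * w j) * v i = w i := by
    intro i
    have heq : ∑ j, s⁻¹ * (v i * v j) * w j = ∑ j, t⁻¹ * (w i * w j) * w j := by
      congr 1; funext j; rw [h' i j]
    have lhs_eq : ∑ j, s⁻¹ * (v i * v j) * w j = s⁻¹ * (∑ j, v j * w j) * v i := by
      rw [Finset.mul_sum, Finset.sum_mul]
      exact Finset.sum_congr rfl fun j _ => by ring
    have rhs_eq : ∑ j, t⁻¹ * (w i * w j) * w j = t⁻¹ * (∑ j, w j * w j) * w i := by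
      rw [Finset.mul_sum, Finset.sum_mul]
      exact Finset.sum_congr rfl fun j _ => by ring
    have ht2 : ∑ j, w j * w j = t := Finset.sum_congr rfl fun j _ => (sq (w j)).symm
    rw [lhs_eq, rhs_eq, ht2, inv_mul_cancel₀ htp.ne', one_mul] at heq
    exact heq
  refine ⟨s⁻¹ * (∑ j, v j * w j), ?_, ?_⟩
  · intro hc
    apply hw
    funext i
    have := key i
    rw [hc, zero_mul] at this
    exact this.symm
  · funext i
    exact (key i).symm

lemma projF_cont : Continuous projF := by
  apply Continuous.quotient_lift
  apply continuous_pi; intro i; apply continuous_pi; intro j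
  have hsum : Continuous fun a : {v : V3 // v ≠ 0} => ∑ k, a.1 k ^ 2 :=
    continuous_finset_sum _ fun k _ => ((continuous_apply k).comp continuous_subtype_val).pow 2
  exact (hsum.inv₀ fun a => (sumsq_pos a.2).ne').mul
    (((continuous_apply i).comp continuous_subtype_val).mul
      ((continuous_apply j).comp continuous_subtype_val))

instance : T2Space RP2 := .of_injective_continuous projF_inj projF_cont

lemma tendsto_RP2_mk {b : ℕ → V3} (hb : ∀ k, b k ≠ 0) {v : V3} (hv : v ≠ 0)
    (h : Tendsto b atTop (𝓝 v)) :
    Tendsto (fun k => RP2.mk (b k) (hb k)) atTop (𝓝 (RP2.mk v hv)) := by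
  have : Tendsto (fun k => (⟨b k, hb k⟩ : {v : V3 // v ≠ 0})) atTop (𝓝 ⟨v, hv⟩) :=
    tendsto_subtype_rng.2 h
  exact (continuous_quotient_mk'.tendsto _).comp this

lemma RP2.mk_smul {v : V3} (hv : v ≠ 0) {c : ℝ} (hc : c ≠ 0) (h : c • v ≠ 0) :
    RP2.mk (c • v) h = RP2.mk v hv :=
  RP2.mk_eq_mk_iff.2 ⟨c⁻¹, inv_ne_zero hc, by rw [smul_smul, inv_mul_cancel₀ hc, one_smul]⟩

lemma target_ne {l : ℝ} (hl : l ≠ 0) {w : V3} (h : ¬(w 0 = 0 ∧ w 1 = 0)) :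
    (![w 0, l * w 1, 0] : V3) ≠ 0 := by
  rw [not_and_or] at h
  rcases h with h | h
  · exact ne_zero_of_coord 0 (by simpa using h)
  · exact ne_zero_of_coord 1 (by simpa using mul_ne_zero hl h)

lemma dyn_key (α β : ℕ → ℝ) (hord : ∀ n, 1 ≤ β n ∧ β n ≤ α n)
    (hβ : Tendsto β atTop atTop) (l : ℝ)
    (hratio : Tendsto (fun n => β n / α n) atTop (𝓝 l))
    (A : ℕ → GL3) (hA : ∀ n, (A n : Matrix (Fin 3) (Fin 3) ℝ) = Matrix.diagonal ![α n, β n, 1])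
    {φ : ℕ → ℕ} (hφ : Tendsto φ atTop atTop)
    {b : ℕ → V3} (hb : ∀ k, b k ≠ 0) {w : V3}
    (hbw : Tendsto b atTop (𝓝 w))
    (hwl : (![w 0, l * w 1, 0] : V3) ≠ 0) :
    Tendsto (fun k => RP2.mapMat (A (φ k)) (RP2.mk (b k) (hb k))) atTop
      (𝓝 (RP2.mk ![w 0, l * w 1, 0] hwl)) := by
  have hβpos : ∀ n, (0:ℝ) < β n := fun n => lt_of_lt_of_le one_pos (hord n).1
  have hαpos : ∀ n, (0:ℝ) < α n := fun n => lt_of_lt_of_le (hβpos n) (hord n).2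
  have hα : Tendsto α atTop atTop := tendsto_atTop_mono (fun n => (hord n).2) hβ
  have hαφ : Tendsto (fun k => α (φ k)) atTop atTop := hα.comp hφ
  set d : ℕ → V3 := fun k =>
    ![b k 0, (β (φ k) / α (φ k)) * b k 1, (α (φ k))⁻¹ * b k 2] with hd_def
  have hAv : ∀ k, (A (φ k) : Matrix (Fin 3) (Fin 3) ℝ) *ᵥ b k = (α (φ k)) • d k := by
    intro k
    funext i
    rw [hA, Matrix.mulVec_diagonal]
    fin_cases i
    · simp [hd_def]
    · simp [hd_def]
      rw [mul_comm (β (φ k) / α (φ k)), ← mul_div_assoc, mul_div_assoc']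
      rw [mul_div_cancel_left₀ _ (hαpos (φ k)).ne', mul_comm]
    · simp [hd_def]
      rw [mul_inv_cancel_left₀ (hαpos (φ k)).ne']
  have hd_ne : ∀ k, d k ≠ 0 := by
    intro k h0
    apply GL3.mulVec_ne (g := A (φ k)) (hb k)
    rw [hAv k, h0, smul_zero]
  have hmk : ∀ k, RP2.mapMat (A (φ k)) (RP2.mk (b k) (hb k)) = RP2.mk (d k) (hd_ne k) := by
    intro k
    rw [RP2.mapMat_mk]
    exact RP2.mk_eq_mk_iff.2 ⟨(α (φ k))⁻¹, inv_ne_zero (hαpos (φ k)).ne',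
      by rw [hAv, smul_smul, inv_mul_cancel₀ (hαpos (φ k)).ne', one_smul]⟩
  have hdlim : Tendsto d atTop (𝓝 ![w 0, l * w 1, 0]) := by
    rw [tendsto_pi_nhds]
    intro i
    fin_cases i
    · simpa [hd_def, Function.comp_def] using ((continuous_apply (0 : Fin 3)).tendsto w).comp hbw
    · simpa [hd_def] using
        (hratio.comp hφ).mul (((continuous_apply (1 : Fin 3)).tendsto w).comp hbw)
    · have : Tendsto (fun k => (α (φ k))⁻¹ * b k 2) atTop (𝓝 (0 * w 2)) :=
        (tendsto_inv_atTop_zero.comp hαφ).mul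
          (((continuous_apply (2 : Fin 3)).tendsto w).comp hbw)
      simpa [hd_def] using this
  exact (tendsto_congr hmk).2 (tendsto_RP2_mk hd_ne hwl hdlim)

/-- Lemma 2.8 (unbalanced type β dynamics on the projective plane, diagonal case). -/
theorem unbalanced_beta_rp2_dynamics
    (α β : ℕ → ℝ) (hord : ∀ n, 1 ≤ β n ∧ β n ≤ α n)
    (hβ : Filter.Tendsto β Filter.atTop Filter.atTop) (l : ℝ) (hl0 : 0 < l) (hl1 : l ≤ 1)
    (hratio : Filter.Tendsto (fun n => β n / α n) Filter.atTop (nhds l))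
    (A : ℕ → GL3)
    (hA : ∀ n, (A n : Matrix (Fin 3) (Fin 3) ℝ) = Matrix.diagonal ![α n, β n, 1]) :
    (∀ (v : V3) (hv : v ≠ 0), ¬(v 0 = 0 ∧ v 1 = 0) →
      DynSet (fun n => RP2.mapMat (A n)) (RP2.mk v hv) = {RP2.mk' ![v 0, l * v 1, 0]}) ∧
    DynSet (fun n => RP2.mapMat (A n)) (RP2.mk ![0, 0, 1] e3_ne) = Set.univ := by
  have hβpos : ∀ n, (0:ℝ) < β n := fun n => lt_of_lt_of_le one_pos (hord n).1
  have hαpos : ∀ n, (0:ℝ) < α n := fun n => lt_of_lt_of_le (hβpos n) (hord n).2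
  constructor
  · -- Part 1
    intro v hv hv01
    have hwl : (![v 0, l * v 1, 0] : V3) ≠ 0 := target_ne hl0.ne' hv01
    have hmk' : RP2.mk' ![v 0, l * v 1, 0] = RP2.mk ![v 0, l * v 1, 0] hwl := dif_neg hwl
    rw [hmk']
    apply Set.eq_singleton_iff_unique_mem.2
    constructor
    · have hmem1 : ∃ φ : ℕ → ℕ, StrictMono φ ∧ ∃ u : ℕ → RP2,
          Tendsto u atTop (𝓝 (RP2.mk v hv)) ∧
          Tendsto (fun k => RP2.mapMat (A (φ k)) (u k)) atTop
            (𝓝 (RP2.mk ![v 0, l * v 1, 0] hwl)) :=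
        ⟨id, strictMono_id, fun _ => RP2.mk v hv, tendsto_const_nhds,
          dyn_key α β hord hβ l hratio A hA tendsto_id (fun _ => hv) tendsto_const_nhds hwl⟩
      exact hmem1
    · rintro y ⟨φ, hφ, u, hu, hy⟩
      -- lift to the unit sphere
      set r : ℕ → {x : V3 // x ≠ 0} := fun k => (u k).out with hr
      have hrne : ∀ k, ‖(r k).1‖ ≠ 0 := fun k => norm_ne_zero_iff.2 (r k).2
      set wk : ℕ → V3 := fun k => ‖(r k).1‖⁻¹ • (r k).1 with hwk
      have hnorm : ∀ k, ‖wk k‖ = 1 := by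
        intro k
        rw [hwk]
        simp only [norm_smul, norm_inv, norm_norm]
        exact inv_mul_cancel₀ (hrne k)
      have hwkne : ∀ k, wk k ≠ 0 := fun k h0 => by
        have h1 := hnorm k; rw [h0, norm_zero] at h1; exact one_ne_zero h1.symm
      have hmem : ∀ k, wk k ∈ Metric.sphere (0 : V3) 1 := fun k => by
        rw [mem_sphere_zero_iff_norm]; exact hnorm k
      have hmku : ∀ k, RP2.mk (wk k) (hwkne k) = u k := by
        intro k
        have hout : u k = RP2.mk (r k).1 (r k).2 := (Quotient.out_eq (u k)).symm
        rw [hout]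
        exact RP2.mk_eq_mk_iff.2 ⟨‖(r k).1‖, hrne k,
          by rw [hwk]; simp only [smul_smul]; rw [mul_inv_cancel₀ (hrne k), one_smul]⟩
      obtain ⟨w₁, hw₁mem, ψ, hψ, hconv⟩ :=
        (isCompact_sphere (0 : V3) 1).tendsto_subseq hmem
      have hw₁ne : w₁ ≠ 0 := by
        rw [mem_sphere_zero_iff_norm] at hw₁mem
        intro h0; rw [h0, norm_zero] at hw₁mem; exact one_ne_zero hw₁mem.symm
      have huψ : Tendsto (fun j => u (ψ j)) atTop (𝓝 (RP2.mk v hv)) :=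
        hu.comp hψ.tendsto_atTop
      have hmkψ : Tendsto (fun j => RP2.mk (wk (ψ j)) (hwkne (ψ j))) atTop
          (𝓝 (RP2.mk w₁ hw₁ne)) := tendsto_RP2_mk _ hw₁ne hconv
      have heq : RP2.mk v hv = RP2.mk w₁ hw₁ne :=
        tendsto_nhds_unique ((tendsto_congr fun j => hmku (ψ j)).2 huψ) hmkψ
      obtain ⟨c, hc, hcv⟩ := RP2.mk_eq_mk_iff.1 heq
      have hw0 : w₁ 0 = c * v 0 := by rw [hcv]; rfl
      have hw1 : w₁ 1 = c * v 1 := by rw [hcv]; rfl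
      have hw01 : ¬(w₁ 0 = 0 ∧ w₁ 1 = 0) := by
        rintro ⟨h0, h1⟩
        apply hv01
        rw [hw0] at h0; rw [hw1] at h1
        exact ⟨(mul_eq_zero.1 h0).resolve_left hc, (mul_eq_zero.1 h1).resolve_left hc⟩
      have hwl' := target_ne hl0.ne' hw01
      have hkey := dyn_key α β hord hβ l hratio A hA ((hφ.comp hψ).tendsto_atTop)
        (fun j => hwkne (ψ j)) hconv hwl'
      have himg : Tendsto (fun j => RP2.mapMat (A (φ (ψ j))) (u (ψ j))) atTop
          (𝓝 (RP2.mk ![w₁ 0, l * w₁ 1, 0] hwl')) := by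
        refine (tendsto_congr fun j => ?_).1 hkey
        rw [hmku (ψ j)]
        rfl
      have himgy : Tendsto (fun j => RP2.mapMat (A (φ (ψ j))) (u (ψ j))) atTop (𝓝 y) :=
        hy.comp hψ.tendsto_atTop
      have hyw : y = RP2.mk ![w₁ 0, l * w₁ 1, 0] hwl' := tendsto_nhds_unique himgy himg
      show y = RP2.mk ![v 0, l * v 1, 0] hwl
      refine hyw.trans (RP2.mk_eq_mk_iff.2 ⟨c, hc, ?_⟩).symm
      funext i
      fin_cases i <;> simp [hw0, hw1] <;> ring
  · -- Part 2
    rw [Set.eq_univ_iff_forall]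
    intro q
    refine RP2.ind (fun y hy => ?_) q
    obtain ⟨φ, hφ, hφβ⟩ := Filter.extraction_forall_of_eventually
      (fun j : ℕ => hβ.eventually_ge_atTop (((j:ℝ) + 1) ^ 2))
    have hk1 : ∀ k : ℕ, (0:ℝ) < (k:ℝ) + 1 := fun k => by positivity
    obtain ⟨s, -, hts⟩ : ∃ s : ℝ, (s = 1 ∨ s = -1) ∧
        ∀ k : ℕ, 1 / ((k:ℝ) + 1) ≤ |y 2 + s / ((k:ℝ) + 1)| := by
      rcases le_or_gt 0 (y 2) with h | h
      · refine ⟨1, Or.inl rfl, fun k => ?_⟩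
        rw [le_abs]; left
        have h1 : (0:ℝ) < 1 / ((k:ℝ) + 1) := by positivity
        linarith
      · refine ⟨-1, Or.inr rfl, fun k => ?_⟩
        rw [le_abs]; right
        have h1 : (0:ℝ) < 1 / ((k:ℝ) + 1) := by positivity
        have h2 : -(y 2 + (-1) / ((k:ℝ) + 1)) = -y 2 + 1 / ((k:ℝ) + 1) := by ring
        rw [h2]; linarith
    set t : ℕ → ℝ := fun k => y 2 + s / ((k:ℝ) + 1) with htd
    have hts' : ∀ k : ℕ, 1 / ((k:ℝ) + 1) ≤ |t k| := hts
    have htne : ∀ k, t k ≠ 0 := by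
      intro k h0
      have h2 := hts' k
      rw [h0, abs_zero] at h2
      have h1 : (0:ℝ) < 1 / ((k:ℝ) + 1) := by positivity
      linarith
    have htinv : ∀ k, |t k|⁻¹ ≤ (k:ℝ) + 1 := by
      intro k
      have h1 : (0:ℝ) < 1 / ((k:ℝ) + 1) := by positivity
      have h2 := inv_anti₀ h1 (hts' k)
      rwa [one_div, inv_inv] at h2
    have ht_lim : Tendsto t atTop (𝓝 (y 2)) := by
      have h0 : Tendsto (fun k : ℕ => s / ((k:ℝ) + 1)) atTop (𝓝 0) := by
        have h1 := tendsto_one_div_add_atTop_nhds_zero_nat (𝕜 := ℝ)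
        have h2 := (tendsto_const_nhds (x := s) (f := (atTop : Filter ℕ))).mul h1
        simpa [mul_one_div, div_eq_mul_inv] using h2
      have h3 := (tendsto_const_nhds (x := y 2) (f := (atTop : Filter ℕ))).add h0
      simpa using h3
    set x : ℕ → V3 := fun k => ![y 0 / α (φ k), y 1 / β (φ k), t k] with hxd
    have hxne : ∀ k, x k ≠ 0 := fun k => ne_zero_of_coord 2 (htne k)
    have hcoord : ∀ (z : ℝ) (k : ℕ) (γ : ℝ), ((k:ℝ) + 1) ^ 2 ≤ γ →
        |(t k)⁻¹ * (z / γ)| ≤ |z| / ((k:ℝ) + 1) := by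
      intro z k γ hγ
      have hγpos : (0:ℝ) < γ := lt_of_lt_of_le (by positivity) hγ
      rw [abs_mul, abs_inv, abs_div, abs_of_pos hγpos]
      calc |t k|⁻¹ * (|z| / γ) ≤ ((k:ℝ) + 1) * (|z| / ((k:ℝ) + 1) ^ 2) := by
            apply mul_le_mul (htinv k) ?_ (by positivity) (by positivity)
            exact div_le_div_of_nonneg_left (abs_nonneg z) (by positivity) hγ
        _ = |z| / ((k:ℝ) + 1) := by
            field_simp
    have hbnd_lim : ∀ z : ℝ, Tendsto (fun k : ℕ => |z| / ((k:ℝ) + 1)) atTop (𝓝 0) := by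
      intro z
      have h1 := tendsto_one_div_add_atTop_nhds_zero_nat (𝕜 := ℝ)
      have h2 := (tendsto_const_nhds (x := |z|) (f := (atTop : Filter ℕ))).mul h1
      simpa [mul_one_div, div_eq_mul_inv] using h2
    set d : ℕ → V3 := fun k =>
      ![(t k)⁻¹ * (y 0 / α (φ k)), (t k)⁻¹ * (y 1 / β (φ k)), 1] with hdd
    have hdx : ∀ k, d k = (t k)⁻¹ • x k := by
      intro k
      show (![(t k)⁻¹ * (y 0 / α (φ k)), (t k)⁻¹ * (y 1 / β (φ k)), 1] : V3) =
        (t k)⁻¹ • ![y 0 / α (φ k), y 1 / β (φ k), t k]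
      rw [Matrix.smul_cons, Matrix.smul_cons, Matrix.smul_cons, Matrix.smul_empty]
      simp only [smul_eq_mul]
      rw [inv_mul_cancel₀ (htne k)]
    have hdne : ∀ k, d k ≠ 0 := fun k => ne_zero_of_coord 2 one_ne_zero
    have hβφ : ∀ k : ℕ, ((k:ℝ) + 1) ^ 2 ≤ β (φ k) := fun k => hφβ k
    have hαφ : ∀ k : ℕ, ((k:ℝ) + 1) ^ 2 ≤ α (φ k) := fun k =>
      le_trans (hβφ k) (hord (φ k)).2
    have hd_lim : Tendsto d atTop (𝓝 ![0, 0, 1]) := by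
      rw [tendsto_pi_nhds]
      intro i
      fin_cases i
      · exact squeeze_zero_norm (fun k => hcoord (y 0) k (α (φ k)) (hαφ k)) (hbnd_lim (y 0))
      · exact squeeze_zero_norm (fun k => hcoord (y 1) k (β (φ k)) (hβφ k)) (hbnd_lim (y 1))
      · exact tendsto_const_nhds
    have hu_lim : Tendsto (fun k => RP2.mk (x k) (hxne k)) atTop
        (𝓝 (RP2.mk ![0, 0, 1] e3_ne)) := by
      have hmkxd : ∀ k, RP2.mk (x k) (hxne k) = RP2.mk (d k) (hdne k) := fun k =>
        RP2.mk_eq_mk_iff.2 ⟨(t k)⁻¹, inv_ne_zero (htne k), hdx k⟩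
      exact (tendsto_congr hmkxd).2 (tendsto_RP2_mk hdne e3_ne hd_lim)
    have hyk : ∀ k, (![y 0, y 1, t k] : V3) ≠ 0 := fun k =>
      ne_zero_of_coord 2 (htne k)
    have himg : ∀ k, RP2.mapMat (A (φ k)) (RP2.mk (x k) (hxne k)) =
        RP2.mk ![y 0, y 1, t k] (hyk k) := by
      intro k
      rw [RP2.mapMat_mk]
      refine RP2.mk_eq_mk_iff.2 ⟨1, one_ne_zero, ?_⟩
      rw [one_smul]
      funext i
      rw [hA, Matrix.mulVec_diagonal]
      fin_cases i
      · show y 0 = α (φ k) * (y 0 / α (φ k))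
        rw [mul_comm, div_mul_cancel₀ _ (hαpos (φ k)).ne']
      · show y 1 = β (φ k) * (y 1 / β (φ k))
        rw [mul_comm, div_mul_cancel₀ _ (hβpos (φ k)).ne']
      · show t k = 1 * t k
        rw [one_mul]
    have hvec_lim : Tendsto (fun k => (![y 0, y 1, t k] : V3)) atTop (𝓝 y) := by
      rw [tendsto_pi_nhds]
      intro i
      fin_cases i
      · exact tendsto_const_nhds
      · exact tendsto_const_nhds
      · exact ht_lim
    have himg_lim : Tendsto (fun k => RP2.mk ![y 0, y 1, t k] (hyk k)) atTop
        (𝓝 (RP2.mk y hy)) := tendsto_RP2_mk hyk hy hvec_lim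
    have hmem2 : ∃ φ' : ℕ → ℕ, StrictMono φ' ∧ ∃ u : ℕ → RP2,
        Tendsto u atTop (𝓝 (RP2.mk ![0, 0, 1] e3_ne)) ∧
        Tendsto (fun k => RP2.mapMat (A (φ' k)) (u k)) atTop (𝓝 (RP2.mk y hy)) :=
      ⟨φ, hφ, fun k => RP2.mk (x k) (hxne k), hu_lim, (tendsto_congr himg).2 himg_lim⟩
    exact hmem2
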